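/- For odd d and any j, the matrix sum Σ_{k=0}^{d−1} D_{j,k} equals d times the matrix whose (r,s) entry is δ_{r, 2⁻¹ j} δ_{s, −2⁻¹ j}, where 2⁻¹ is the inverse of 2 modulo d. -/

import Mathlib

open Matrix Finset ComplexConjugate

noncomputable section

/-- ω = exp(2πi/d) -/
def omg (d : ℕ) : ℂ := Complex.exp (2 * Real.pi * Complex.I / d)

/-- τ = -exp(πi/d) -/
def tau (d : ℕ) : ℂ := -Complex.exp (Real.pi * Complex.I / d)

/-- The clock matrix `Z`, with `Z|r⟩ = ω^r |r⟩`. -/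
def Zmat (d : ℕ) [NeZero d] : Matrix (ZMod d) (ZMod d) ℂ :=
  Matrix.diagonal fun r => omg d ^ r.val

/-- The shift matrix `X`, with `X|r⟩ = |r+1⟩` (indices mod d). -/
def Xmat (d : ℕ) [NeZero d] : Matrix (ZMod d) (ZMod d) ℂ :=
  Matrix.of fun r s => if r = s + 1 then 1 else 0

/-- The displacement operators `D_{j,k} = τ^{jk} X^j Z^k`. -/
def Dmat (d : ℕ) [NeZero d] (j k : ZMod d) : Matrix (ZMod d) (ZMod d) ℂ :=
  tau d ^ (j.val * k.val) • (Xmat d ^ j.val * Zmat d ^ k.val)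

/-- Standard Hermitian inner product, conjugate-linear in the first argument. -/
def ip {d : ℕ} [NeZero d] (u w : ZMod d → ℂ) : ℂ := ∑ k, conj (u k) * w k

lemma Xmat_pow_apply (d : ℕ) [NeZero d] (n : ℕ) (r s : ZMod d) :
    (Xmat d ^ n) r s = if r = s + (n : ZMod d) then 1 else 0 := by
  induction n generalizing r s with
  | zero => simp [Matrix.one_apply]
  | succ n ih =>
    rw [pow_succ, Matrix.mul_apply]
    rw [Finset.sum_eq_single (s + 1)]
    · have h1 : Xmat d (s + 1) s = 1 := if_pos rfl
      have h2 : s + 1 + (n : ZMod d) = s + ((n + 1 : ℕ) : ZMod d) := by push_cast; ring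
      show (Xmat d ^ n) r (s + 1) * Xmat d (s + 1) s = _
      rw [h1, mul_one, ih, h2]
    · intro t _ ht
      simp [Xmat, ht]
    · simp

lemma omg_pow_one (d : ℕ) [NeZero d] : omg d ^ d = 1 :=
  (Complex.isPrimitiveRoot_exp d (NeZero.ne d)).pow_eq_one

lemma tau_eq (d : ℕ) [NeZero d] (hd : Odd d) : tau d = omg d ^ ((d + 1) / 2) := by
  obtain ⟨m, hm⟩ := hd
  have hdc : (d : ℂ) ≠ 0 := Nat.cast_ne_zero.mpr (NeZero.ne d)
  have h2 : ((d + 1) / 2 : ℕ) = m + 1 := by omega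
  rw [omg, ← Complex.exp_nat_mul, h2, tau]
  have key : ((m + 1 : ℕ) : ℂ) * (2 * Real.pi * Complex.I / d) =
      Real.pi * Complex.I + Real.pi * Complex.I / d := by
    have hmc : (d : ℂ) = 2 * m + 1 := by exact_mod_cast congrArg Nat.cast hm
    field_simp
    linear_combination (norm := (push_cast; ring)) -hmc
  rw [key, Complex.exp_add, Complex.exp_pi_mul_I]
  ring

lemma sum_val_pow (d : ℕ) [NeZero d] (z : ℂ) :
    ∑ k : ZMod d, z ^ (ZMod.val k) = ∑ i ∈ Finset.range d, z ^ i := by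
  obtain ⟨n, rfl⟩ := Nat.exists_eq_succ_of_ne_zero (NeZero.ne d)
  exact Fin.sum_univ_eq_sum_range _ _

/-- for odd d, `Σ_{k=0}^{d-1} D_{j,k}` equals d times the matrix
with (r,s) entry `δ_{r, 2⁻¹ j} δ_{s, −2⁻¹ j}`, where `2⁻¹` is the inverse of 2 mod d. -/
theorem sum_displacement_row (d : ℕ) [NeZero d] (hd : Odd d) (j : ZMod d) :
    ∑ k : ZMod d, Dmat d j k =
      (d : ℂ) • Matrix.of (fun r s : ZMod d =>
        if r = (2 : ZMod d)⁻¹ * j ∧ s = -((2 : ZMod d)⁻¹ * j) then (1 : ℂ) else 0) := by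
  have hd0 : d ≠ 0 := NeZero.ne d
  have hprim : IsPrimitiveRoot (omg d) d := Complex.isPrimitiveRoot_exp d hd0
  set h : ℕ := (d + 1) / 2 with hh
  have h2u : IsUnit (2 : ZMod d) := by
    have := (ZMod.isUnit_iff_coprime 2 d).mpr (Nat.coprime_two_left.mpr hd)
    simpa using this
  have h21 : (2 : ZMod d)⁻¹ * 2 = 1 := ZMod.inv_mul_of_unit _ h2u
  have h2h : (2 : ZMod d) * (h : ZMod d) = 1 := by
    have : (2 * h : ℕ) = d + 1 := by obtain ⟨m, hm⟩ := hd; omega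
    have := congrArg (Nat.cast : ℕ → ZMod d) this
    push_cast at this
    rw [this, ZMod.natCast_self]; ring
  have hinv : ((h : ZMod d)) = (2 : ZMod d)⁻¹ := by
    calc (h : ZMod d) = ((2 : ZMod d)⁻¹ * 2) * h := by rw [h21, one_mul]
    _ = (2 : ZMod d)⁻¹ * (2 * h) := by ring
    _ = (2 : ZMod d)⁻¹ := by rw [h2h, mul_one]
  ext r s
  simp only [Matrix.sum_apply, Dmat, Matrix.smul_apply, Matrix.of_apply, smul_eq_mul]
  have hZ : ∀ k : ZMod d, (Zmat d ^ k.val) = Matrix.diagonal (fun t => (omg d ^ t.val) ^ k.val) := by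
    intro k; rw [Zmat, Matrix.diagonal_pow]; rfl
  have hentry : ∀ k : ZMod d, (Xmat d ^ j.val * Zmat d ^ k.val) r s =
      (if r = s + j then 1 else 0) * (omg d ^ s.val) ^ k.val := by
    intro k
    rw [hZ, Matrix.mul_diagonal, Xmat_pow_apply, ZMod.natCast_rightInverse j]
  set ζ : ℂ := omg d ^ (h * j.val + s.val) with hζdef
  have hterm : ∀ k : ZMod d, tau d ^ (j.val * k.val) *
      ((if r = s + j then (1:ℂ) else 0) * (omg d ^ s.val) ^ k.val) =
      (if r = s + j then (1:ℂ) else 0) * ζ ^ k.val := by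
    intro k
    have : tau d ^ (j.val * k.val) * (omg d ^ s.val) ^ k.val = ζ ^ k.val := by
      rw [tau_eq d hd, ← hh, hζdef, ← pow_mul, ← pow_mul, ← pow_add, ← pow_mul]
      congr 1
      ring
    rw [← this]; ring
  have hζ1 : ζ = 1 ↔ s = -((2 : ZMod d)⁻¹ * j) := by
    rw [hζdef, hprim.pow_eq_one_iff_dvd, ← ZMod.natCast_eq_zero_iff]
    push_cast
    rw [ZMod.natCast_rightInverse s, ZMod.natCast_rightInverse j, hinv]
    constructor
    · intro hz
      linear_combination hz
    · intro hz
      rw [hz]; ring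
  have hζd : ζ ^ d = 1 := by
    rw [hζdef, ← pow_mul, mul_comm, pow_mul, omg_pow_one, one_pow]
  have hkey : -((2 : ZMod d)⁻¹ * j) + j = (2 : ZMod d)⁻¹ * j := by
    linear_combination (-j) * h21
  calc ∑ k : ZMod d, tau d ^ (j.val * k.val) * (Xmat d ^ j.val * Zmat d ^ k.val) r s
      = ∑ k : ZMod d, (if r = s + j then (1:ℂ) else 0) * ζ ^ k.val := by
        refine Finset.sum_congr rfl fun k _ => ?_
        rw [hentry k, hterm k]
    _ = (if r = s + j then (1:ℂ) else 0) * ∑ i ∈ Finset.range d, ζ ^ i := by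
        rw [← Finset.mul_sum, sum_val_pow]
    _ = (d : ℂ) * (if r = (2 : ZMod d)⁻¹ * j ∧ s = -((2 : ZMod d)⁻¹ * j) then (1:ℂ) else 0) := by
        by_cases hs : s = -((2 : ZMod d)⁻¹ * j)
        · have hz : ζ = 1 := hζ1.mpr hs
          have hr : s + j = (2 : ZMod d)⁻¹ * j := by rw [hs, hkey]
          rw [hz]
          simp only [one_pow, Finset.sum_const, Finset.card_range, nsmul_eq_mul, mul_one]
          by_cases hrr : r = s + j
          · rw [if_pos hrr, if_pos ⟨hrr.trans hr, hs⟩]; ring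
          · rw [if_neg hrr, if_neg (fun hc => hrr (hc.1.trans hr.symm)), mul_zero, zero_mul]
        · have hz : ζ ≠ 1 := fun hc => hs (hζ1.mp hc)
          rw [geom_sum_eq hz, hζd, sub_self, zero_div, mul_zero,
            if_neg (fun hc => hs hc.2), mul_zero]
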